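/- (Reciprocity for Dedekind–Rademacher sums, special case.) For coprime positive integers a and b with a odd, s(a,b;0,1/2) + s(b,a;1/2,0) = (2b² - a² - 1)/(24ab). -/

import Mathlib

open Finset Real

open Classical in
/-- The sawtooth function: 0 on integers, fractional part minus 1/2 otherwise. -/
noncomputable def saw (x : ℝ) : ℝ :=
  if ∃ n : ℤ, x = n then 0 else Int.fract x - 1/2

/-- The Dedekind sum s(q,p). -/
noncomputable def dedekindSum (q : ℤ) (p : ℕ) : ℝ :=
  ∑ μ ∈ Finset.range p, saw ((μ : ℝ) / p) * saw ((q : ℝ) * μ / p)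

/-- The Dedekind–Rademacher sum s(q,p;x,y). -/
noncomputable def drSum (q : ℤ) (p : ℕ) (x y : ℝ) : ℝ :=
  ∑ μ ∈ Finset.range p, saw (((μ : ℝ) + y) / p) * saw ((q : ℝ) * ((μ : ℝ) + y) / p + x)

lemma saw_intCast (n : ℤ) : saw ((n : ℤ) : ℝ) = 0 := if_pos ⟨n, rfl⟩

lemma saw_eq {x : ℝ} (h : ¬ ∃ n : ℤ, x = n) : saw x = Int.fract x - 1/2 := if_neg h

lemma saw_half (x : ℝ) : saw (x + 1/2) = saw (2*x) - saw x := by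
  by_cases h1 : ∃ n : ℤ, x = n
  · obtain ⟨n, rfl⟩ := h1
    have h3 : saw (2*(n:ℝ)) = 0 := by
      rw [show (2*(n:ℝ)) = ((2*n : ℤ) : ℝ) by push_cast; ring]; exact saw_intCast _
    have h4 : ¬ ∃ m : ℤ, (n:ℝ) + 1/2 = m := by
      rintro ⟨m, hm⟩
      have h5 : (2*n+1 : ℝ) = 2*m := by linarith
      have h6 : (2*n+1 : ℤ) = 2*m := by exact_mod_cast h5
      omega
    rw [saw_intCast n, h3, saw_eq h4, Int.fract_intCast_add]
    norm_num [Int.fract_eq_self.mpr (by norm_num : (0:ℝ) ≤ 1/2 ∧ (1:ℝ)/2 < 1)]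
  · by_cases h2 : ∃ m : ℤ, 2*x = m
    · obtain ⟨m, hm⟩ := h2
      obtain ⟨l, hl⟩ : ∃ l : ℤ, m = 2*l + 1 := by
        rcases Int.even_or_odd m with ⟨l, hl⟩ | ⟨l, hl⟩
        · exfalso; exact h1 ⟨l, by rw [hl] at hm; push_cast at hm ⊢; linarith⟩
        · exact ⟨l, hl⟩
      have hx : x = (l:ℝ) + 1/2 := by
        have : (2:ℝ)*x = 2*l+1 := by rw [hm, hl]; push_cast; ring
        linarith
      have hsx : saw x = 0 := by
        rw [saw_eq h1, hx, Int.fract_intCast_add]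
        norm_num [Int.fract_eq_self.mpr (by norm_num : (0:ℝ) ≤ 1/2 ∧ (1:ℝ)/2 < 1)]
      have h2x : saw (2*x) = 0 := by rw [hm]; exact saw_intCast m
      have hx2 : saw (x + 1/2) = 0 := by
        rw [show x + 1/2 = ((l+1 : ℤ) : ℝ) by rw [hx]; push_cast; ring]
        exact saw_intCast _
      rw [hsx, h2x, hx2]; ring
    · have h3 : ¬ ∃ m : ℤ, x + 1/2 = m := by
        rintro ⟨m, hm⟩
        exact h2 ⟨2*m - 1, by push_cast; linarith⟩
      set t := Int.fract x with ht
      have ht0 : 0 ≤ t := Int.fract_nonneg x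
      have ht1 : t < 1 := Int.fract_lt_one x
      have htne0 : t ≠ 0 := by
        intro h
        exact h1 ⟨⌊x⌋, by have := Int.floor_add_fract x; rw [← ht] at this; linarith⟩
      have htne : t ≠ 1/2 := by
        intro h
        apply h2
        refine ⟨2*⌊x⌋ + 1, ?_⟩
        have := Int.floor_add_fract x
        rw [← ht, h] at this
        push_cast; linarith
      have hfl := Int.floor_add_fract x
      rw [← ht] at hfl
      rw [saw_eq h1, saw_eq h2, saw_eq h3]
      have e1 : Int.fract (x + 1/2) = Int.fract (t + 1/2) := by
        rw [show x + 1/2 = (⌊x⌋ : ℝ) + (t + 1/2) by linarith, Int.fract_intCast_add]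
      have e2 : Int.fract (2*x) = Int.fract (2*t) := by
        rw [show 2*x = ((2*⌊x⌋ : ℤ) : ℝ) + 2*t by push_cast; linarith, Int.fract_intCast_add]
      rcases lt_or_gt_of_ne htne with hlt | hgt
      · rw [e1, e2, Int.fract_eq_self.mpr ⟨by linarith, by linarith⟩,
          Int.fract_eq_self.mpr ⟨by linarith, by linarith⟩]
        ring
      · have e3 : Int.fract (t + 1/2) = t - 1/2 := by
          rw [show t + 1/2 = ((1:ℤ):ℝ) + (t - 1/2) by push_cast; ring, Int.fract_intCast_add,
            Int.fract_eq_self.mpr ⟨by linarith, by linarith⟩]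
        have e4 : Int.fract (2*t) = 2*t - 1 := by
          rw [show 2*t = ((1:ℤ):ℝ) + (2*t - 1) by push_cast; ring, Int.fract_intCast_add,
            Int.fract_eq_self.mpr ⟨by linarith, by linarith⟩]
          norm_num
        rw [e1, e2, e3, e4]; ring

lemma sum_range_two_mul {M : Type*} [AddCommMonoid M] (p : ℕ) (g : ℕ → M) :
    ∑ ν ∈ Finset.range (2*p), g ν = ∑ μ ∈ Finset.range p, (g (2*μ) + g (2*μ+1)) := by
  induction p with
  | zero => simp
  | succ n ih =>
    rw [show 2*(n+1) = 2*n + 1 + 1 by ring, Finset.sum_range_succ, Finset.sum_range_succ, ih,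
      Finset.sum_range_succ, add_assoc]

lemma gauss1 (n : ℕ) : (∑ k ∈ Finset.range n, (k:ℤ)) * 2 = n * (n-1) := by
  induction n with
  | zero => simp
  | succ m ih => rw [Finset.sum_range_succ, add_mul, ih]; push_cast; ring

lemma gauss2 (n : ℕ) : (∑ k ∈ Finset.range n, (k:ℤ)^2) * 6 = n * (n-1) * (2*n-1) := by
  induction n with
  | zero => simp
  | succ m ih => rw [Finset.sum_range_succ, add_mul, ih]; push_cast; ring

lemma gaussIco (m : ℕ) : ∑ j ∈ Finset.Ico 1 (m+1), (2*(j:ℤ)) = (m:ℤ)^2 + m := by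
  induction m with
  | zero => simp
  | succ n ih =>
    rw [Finset.sum_Ico_succ_top (by omega), ih]; push_cast; ring
lemma sum_mod_perm (a b : ℕ) (hb : 0 < b) (h : Nat.Coprime a b) (f : ℕ → ℤ) :
    ∑ k ∈ Finset.range b, f (a * k % b) = ∑ k ∈ Finset.range b, f k := by
  have hinj : ∀ x ∈ Finset.range b, ∀ y ∈ Finset.range b, a*x % b = a*y % b → x = y := by
    intro x hx y hy hxy
    rw [Finset.mem_range] at hx hy
    have h1 : a * x ≡ a * y [MOD b] := hxy
    have h2 : x ≡ y [MOD b] := Nat.ModEq.cancel_left_of_coprime (by rwa [Nat.coprime_comm] at h) h1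
    have := h2.eq_of_lt_of_lt hx hy
    exact this
  have himg : (Finset.range b).image (fun k => a * k % b) = Finset.range b := by
    apply Finset.eq_of_subset_of_card_le
    · intro x hx
      simp only [Finset.mem_image, Finset.mem_range] at hx ⊢
      obtain ⟨k, _, rfl⟩ := hx
      exact Nat.mod_lt _ hb
    · rw [Finset.card_image_of_injOn (by intro x hx y hy; exact hinj x hx y hy)]
  conv_rhs => rw [← himg]
  rw [Finset.sum_image hinj]

lemma sumS (a b : ℕ) (hb : 0 < b) (h : Nat.Coprime a b) :
    (a:ℤ) * (∑ k ∈ Finset.range b, (k:ℤ))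
      = b * (∑ k ∈ Finset.range b, ((a*k/b : ℕ) : ℤ)) + ∑ k ∈ Finset.range b, (k:ℤ) := by
  have h1 : ∑ k ∈ Finset.range b, ((a*k % b : ℕ):ℤ) = ∑ k ∈ Finset.range b, (k:ℤ) :=
    sum_mod_perm a b hb h (fun n => (n:ℤ))
  have h2 : ∀ k ∈ Finset.range b, (a:ℤ) * (k:ℤ) = (b:ℤ) * ((a*k/b:ℕ):ℤ) + ((a*k % b : ℕ):ℤ) := by
    intro k _
    exact_mod_cast (Nat.div_add_mod (a*k) b).symm
  rw [Finset.mul_sum, Finset.sum_congr rfl h2, Finset.sum_add_distrib, ← Finset.mul_sum, h1]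

lemma sumE (a b : ℕ) (hb : 0 < b) (h : Nat.Coprime a b) :
    (a:ℤ)^2 * (∑ k ∈ Finset.range b, (k:ℤ)^2)
        - 2*a*b*(∑ k ∈ Finset.range b, (k:ℤ) * ((a*k/b:ℕ):ℤ))
        + b^2 * (∑ k ∈ Finset.range b, ((a*k/b:ℕ):ℤ)^2)
      = ∑ k ∈ Finset.range b, (k:ℤ)^2 := by
  have h1 : ∑ k ∈ Finset.range b, ((a*k % b : ℕ):ℤ)^2 = ∑ k ∈ Finset.range b, (k:ℤ)^2 :=
    sum_mod_perm a b hb h (fun n => (n:ℤ)^2)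
  have h2 : ∀ k ∈ Finset.range b,
      (a:ℤ)^2 * (k:ℤ)^2 - 2*a*b*((k:ℤ)*((a*k/b:ℕ):ℤ)) + (b:ℤ)^2*((a*k/b:ℕ):ℤ)^2
        = ((a*k % b : ℕ):ℤ)^2 := by
    intro k _
    have e : ((a*k % b : ℕ):ℤ) = (a:ℤ)*k - (b:ℤ)*((a*k/b:ℕ):ℤ) := by
      have := Nat.div_add_mod (a*k) b
      have e2 : (b:ℤ) * ((a*k/b:ℕ):ℤ) + ((a*k % b:ℕ):ℤ) = (a:ℤ)*k := by exact_mod_cast this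
      linarith
    rw [e]; ring
  calc (a:ℤ)^2 * (∑ k ∈ Finset.range b, (k:ℤ)^2)
        - 2*a*b*(∑ k ∈ Finset.range b, (k:ℤ) * ((a*k/b:ℕ):ℤ))
        + b^2 * (∑ k ∈ Finset.range b, ((a*k/b:ℕ):ℤ)^2)
      = ∑ k ∈ Finset.range b, ((a:ℤ)^2 * (k:ℤ)^2 - 2*a*b*((k:ℤ)*((a*k/b:ℕ):ℤ))
          + (b:ℤ)^2*((a*k/b:ℕ):ℤ)^2) := by
        rw [Finset.sum_add_distrib, Finset.sum_sub_distrib, ← Finset.mul_sum, ← Finset.mul_sum,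
          ← Finset.mul_sum]
    _ = ∑ k ∈ Finset.range b, ((a*k % b : ℕ):ℤ)^2 := Finset.sum_congr rfl h2
    _ = ∑ k ∈ Finset.range b, (k:ℤ)^2 := h1

lemma count2 (a b : ℕ) (ha : 0 < a) (hb : 0 < b) (h : Nat.Coprime a b) :
    (∑ k ∈ Finset.range b, ((a*k/b : ℕ):ℤ)^2) + (∑ k ∈ Finset.range b, ((a*k/b:ℕ):ℤ))
      + 2 * (∑ j ∈ Finset.range a, (j:ℤ) * ((b*j/a : ℕ):ℤ))
      = (a:ℤ) * ((a:ℤ)-1) * ((b:ℤ)-1) := by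
  have row : ∀ k ∈ Finset.range b,
      ∑ j ∈ Finset.Ico 1 a, (if b*j < a*k then (2*(j:ℤ)) else 0)
        = ((a*k/b:ℕ):ℤ)^2 + ((a*k/b:ℕ):ℤ) := by
    intro k hk
    rw [Finset.mem_range] at hk
    have hqa : a*k/b + 1 ≤ a := by
      have : a*k/b < a := by
        rw [Nat.div_lt_iff_lt_mul hb]
        exact mul_lt_mul_of_pos_left hk ha
      omega
    have hiff : ∀ j, 1 ≤ j → (b*j < a*k ↔ j < a*k/b + 1) := by
      intro j hj
      constructor
      · intro hlt
        have : j ≤ a*k/b := by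
          rw [Nat.le_div_iff_mul_le hb, Nat.mul_comm j b]
          exact le_of_lt hlt
        omega
      · intro hlt
        have h1 : j ≤ a*k/b := by omega
        have h2 : j * b ≤ a*k := (Nat.le_div_iff_mul_le hb).mp h1
        have h3 : j * b ≠ a*k := by
          intro he
          have hdvd : b ∣ a * k := ⟨j, by rw [← he, Nat.mul_comm]⟩
          have hbk : b ∣ k := (Nat.Coprime.dvd_of_dvd_mul_left (by rwa [Nat.coprime_comm] at h)) hdvd
          have hk0 : 0 < k := by
            rcases Nat.eq_zero_or_pos k with rfl | hpos
            · rw [Nat.mul_zero] at he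
              have : j * b ≠ 0 := Nat.mul_ne_zero (by omega) (by omega)
              omega
            · exact hpos
          have := Nat.le_of_dvd hk0 hbk
          omega
        rw [Nat.mul_comm b j]
        exact lt_of_le_of_ne h2 h3
    have hsplit : ∑ j ∈ Finset.Ico 1 a, (if b*j < a*k then (2*(j:ℤ)) else 0)
        = ∑ j ∈ Finset.Ico 1 (a*k/b+1), (if b*j < a*k then (2*(j:ℤ)) else 0)
          + ∑ j ∈ Finset.Ico (a*k/b+1) a, (if b*j < a*k then (2*(j:ℤ)) else 0) :=
      (Finset.sum_Ico_consecutive _ (Nat.succ_le_succ (Nat.zero_le _)) hqa).symm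
    rw [hsplit]
    have e1 : ∑ j ∈ Finset.Ico 1 (a*k/b+1), (if b*j < a*k then (2*(j:ℤ)) else 0)
        = ∑ j ∈ Finset.Ico 1 (a*k/b+1), (2*(j:ℤ)) := by
      apply Finset.sum_congr rfl
      intro j hj
      rw [Finset.mem_Ico] at hj
      exact if_pos ((hiff j hj.1).mpr hj.2)
    have e2 : ∑ j ∈ Finset.Ico (a*k/b+1) a, (if b*j < a*k then (2*(j:ℤ)) else 0) = 0 := by
      apply Finset.sum_eq_zero
      intro j hj
      rw [Finset.mem_Ico] at hj
      exact if_neg (fun hc => by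
        have h1 : 1 ≤ j := le_trans (Nat.succ_le_succ (Nat.zero_le _)) hj.1
        have h2 := (hiff j h1).mp hc
        exact absurd (lt_of_lt_of_le h2 hj.1) (lt_irrefl j))
    rw [e1, e2, gaussIco (a*k/b), add_zero]
  have col : ∀ j ∈ Finset.Ico 1 a,
      ∑ k ∈ Finset.range b, (if b*j < a*k then (2*(j:ℤ)) else 0)
        = 2*(j:ℤ)*((b:ℤ) - 1 - ((b*j/a:ℕ):ℤ)) := by
    intro j hj
    rw [Finset.mem_Ico] at hj
    have hpb : b*j/a + 1 ≤ b := by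
      have : b*j/a < b := by
        rw [Nat.div_lt_iff_lt_mul ha]
        exact mul_lt_mul_of_pos_left hj.2 hb
      omega
    have hiff : ∀ k, (b*j < a*k ↔ b*j/a + 1 ≤ k) := by
      intro k
      constructor
      · intro hlt
        have : b*j/a < k := by
          rw [Nat.div_lt_iff_lt_mul ha, Nat.mul_comm k a]
          exact hlt
        omega
      · intro hle
        have hlt : b*j/a < k := by omega
        rw [Nat.div_lt_iff_lt_mul ha] at hlt
        rw [Nat.mul_comm a k]
        exact hlt
    rw [Finset.range_eq_Ico,
      ← Finset.sum_Ico_consecutive _ (Nat.zero_le (b*j/a+1)) hpb]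
    have e1 : ∑ k ∈ Finset.Ico 0 (b*j/a+1), (if b*j < a*k then (2*(j:ℤ)) else 0) = 0 := by
      apply Finset.sum_eq_zero
      intro k hk
      rw [Finset.mem_Ico] at hk
      exact if_neg (fun hc => by
        have h2 := (hiff k).mp hc
        exact absurd (lt_of_lt_of_le hk.2 h2) (lt_irrefl k))
    have e2 : ∑ k ∈ Finset.Ico (b*j/a+1) b, (if b*j < a*k then (2*(j:ℤ)) else 0)
        = ((b - (b*j/a+1) : ℕ) : ℤ) * (2*(j:ℤ)) := by
      rw [Finset.sum_congr rfl (fun k hk => if_pos ((hiff k).mpr (Finset.mem_Ico.mp hk).1)),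
        Finset.sum_const, Nat.card_Ico, nsmul_eq_mul]
    rw [e1, e2, zero_add, Nat.cast_sub hpb]
    push_cast
    ring
  have main : (∑ k ∈ Finset.range b, ((a*k/b : ℕ):ℤ)^2) + (∑ k ∈ Finset.range b, ((a*k/b:ℕ):ℤ))
      = ∑ j ∈ Finset.Ico 1 a, 2*(j:ℤ)*((b:ℤ) - 1 - ((b*j/a:ℕ):ℤ)) := by
    rw [← Finset.sum_add_distrib, ← Finset.sum_congr rfl row, Finset.sum_comm,
      Finset.sum_congr rfl col]
  have expand : ∑ j ∈ Finset.Ico 1 a, 2*(j:ℤ)*((b:ℤ) - 1 - ((b*j/a:ℕ):ℤ))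
      = (a:ℤ)*((a:ℤ)-1)*((b:ℤ)-1) - 2*(∑ j ∈ Finset.range a, (j:ℤ) * ((b*j/a : ℕ):ℤ)) := by
    have hIR : ∑ j ∈ Finset.range a, (j:ℤ) * ((b*j/a : ℕ):ℤ)
        = ∑ j ∈ Finset.Ico 1 a, (j:ℤ) * ((b*j/a : ℕ):ℤ) := by
      rw [Finset.range_eq_Ico, Finset.sum_eq_sum_Ico_succ_bot ha]
      simp
    have hg : ∑ j ∈ Finset.Ico 1 a, (2*(j:ℤ)) = (a:ℤ)^2 - a := by
      have h1 := gaussIco (a-1)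
      rw [Nat.sub_add_cancel ha] at h1
      rw [h1, Nat.cast_sub ha]
      push_cast
      ring
    have hsplit : ∑ j ∈ Finset.Ico 1 a, 2*(j:ℤ)*((b:ℤ) - 1 - ((b*j/a:ℕ):ℤ))
        = ((b:ℤ)-1) * (∑ j ∈ Finset.Ico 1 a, (2*(j:ℤ)))
          - 2 * (∑ j ∈ Finset.Ico 1 a, (j:ℤ) * ((b*j/a : ℕ):ℤ)) := by
      rw [Finset.mul_sum, Finset.mul_sum, ← Finset.sum_sub_distrib]
      apply Finset.sum_congr rfl
      intro j _
      ring
    rw [hsplit, hg, hIR]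
    ring
  rw [main, expand]
  ring
lemma saw_zero : saw (0:ℝ) = 0 := by
  have := saw_intCast 0
  simpa using this

lemma ded_sum_eq (a b : ℕ) (hb : 0 < b) (h : Nat.Coprime a b) :
    dedekindSum (a:ℤ) b
      = ((a:ℝ)/(b:ℝ)^2) * (∑ k ∈ Finset.range b, (k:ℝ)^2)
        - (1/(b:ℝ)) * (∑ k ∈ Finset.range b, (k:ℝ) * ((a*k/b : ℕ):ℝ))
        - (((a:ℝ)+1)/(2*(b:ℝ))) * (∑ k ∈ Finset.range b, (k:ℝ))
        + (1/2) * (∑ k ∈ Finset.range b, ((a*k/b:ℕ):ℝ))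
        + (b:ℝ)/4 - 1/4 := by
  have hbR : (b:ℝ) ≠ 0 := Nat.cast_ne_zero.mpr (by omega)
  have key : ∀ k ∈ Finset.Ico 1 b,
      saw ((k:ℝ)/(b:ℝ)) * saw ((((a:ℕ):ℤ):ℝ)*(k:ℝ)/(b:ℝ))
        = ((a:ℝ)/(b:ℝ)^2) * (k:ℝ)^2 - (1/(b:ℝ)) * ((k:ℝ)*((a*k/b:ℕ):ℝ))
          - (((a:ℝ)+1)/(2*(b:ℝ))) * (k:ℝ) + (1/2) * ((a*k/b:ℕ):ℝ) + 1/4 := by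
    intro k hk
    rw [Finset.mem_Ico] at hk
    obtain ⟨hk1, hk2⟩ := hk
    have hkb0 : (0:ℝ) < (k:ℝ)/(b:ℝ) := by
      apply div_pos (by exact_mod_cast hk1) (by exact_mod_cast hb)
    have hkb1 : (k:ℝ)/(b:ℝ) < 1 := by
      rw [div_lt_one (by exact_mod_cast hb)]
      exact_mod_cast hk2
    have hnint1 : ¬ ∃ n : ℤ, (k:ℝ)/(b:ℝ) = n := by
      rintro ⟨n, hn⟩
      rw [hn] at hkb0 hkb1
      have c1 : (0:ℤ) < n := by exact_mod_cast hkb0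
      have c2 : n < 1 := by exact_mod_cast hkb1
      omega
    have hfr1 : Int.fract ((k:ℝ)/(b:ℝ)) = (k:ℝ)/(b:ℝ) :=
      Int.fract_eq_self.mpr ⟨le_of_lt hkb0, hkb1⟩
    have hdm : ((a:ℝ)*(k:ℝ)) = (b:ℝ)*((a*k/b:ℕ):ℝ) + ((a*k % b:ℕ):ℝ) := by
      exact_mod_cast (Nat.div_add_mod (a*k) b).symm
    have hnint2 : ¬ ∃ n : ℤ, (a:ℝ)*(k:ℝ)/(b:ℝ) = n := by
      rintro ⟨n, hn⟩
      rw [div_eq_iff hbR] at hn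
      have hz : ((a*k:ℕ):ℤ) = n * (b:ℤ) := by exact_mod_cast hn
      have hdvd : (b:ℕ) ∣ a*k := by
        have : ((b:ℕ):ℤ) ∣ ((a*k:ℕ):ℤ) := ⟨n, by linear_combination hz⟩
        exact_mod_cast this
      have hbk : b ∣ k := (Nat.Coprime.dvd_of_dvd_mul_left (by rwa [Nat.coprime_comm] at h)) hdvd
      have := Nat.le_of_dvd (by omega) hbk
      omega
    have hmodlt : ((a*k % b : ℕ):ℝ) < (b:ℝ) := by
      exact_mod_cast Nat.mod_lt (a*k) hb
    have hfr2 : Int.fract ((a:ℝ)*(k:ℝ)/(b:ℝ)) = ((a*k % b:ℕ):ℝ)/(b:ℝ) := by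
      have harg : (a:ℝ)*(k:ℝ)/(b:ℝ) = (((a*k/b:ℕ):ℤ):ℝ) + ((a*k % b:ℕ):ℝ)/(b:ℝ) := by
        rw [show ((((a*k/b:ℕ)):ℤ):ℝ) = ((a*k/b:ℕ):ℝ) from Int.cast_natCast _]
        field_simp
        linear_combination hdm
      rw [harg, Int.fract_intCast_add, Int.fract_eq_self.mpr
        ⟨by positivity, by rwa [div_lt_one (by exact_mod_cast hb)]⟩]
    have hsaw1 : saw ((k:ℝ)/(b:ℝ)) = (k:ℝ)/(b:ℝ) - 1/2 := by rw [saw_eq hnint1, hfr1]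
    have hsaw2 : saw ((((a:ℕ):ℤ):ℝ)*(k:ℝ)/(b:ℝ)) = ((a*k % b:ℕ):ℝ)/(b:ℝ) - 1/2 := by
      rw [show (((a:ℕ):ℤ):ℝ) = (a:ℝ) by push_cast; ring, saw_eq hnint2, hfr2]
    rw [hsaw1, hsaw2]
    have hmod : ((a*k % b:ℕ):ℝ) = (a:ℝ)*(k:ℝ) - (b:ℝ)*((a*k/b:ℕ):ℝ) := by linarith [hdm]
    rw [hmod]
    field_simp
    ring
  simp only [dedekindSum]
  rw [Finset.range_eq_Ico, Finset.sum_eq_sum_Ico_succ_bot hb]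
  have h00 : saw (((0:ℕ):ℝ)/(b:ℝ)) * saw ((((a:ℕ):ℤ):ℝ)*((0:ℕ):ℝ)/(b:ℝ)) = 0 := by
    norm_num [saw_zero]
  rw [h00, zero_add, Finset.sum_congr rfl key]
  have s1 : ∑ k ∈ Finset.Ico 0 b, (k:ℝ)^2 = ∑ k ∈ Finset.Ico 1 b, (k:ℝ)^2 := by
    rw [Finset.sum_eq_sum_Ico_succ_bot hb]; norm_num
  have s2 : ∑ k ∈ Finset.Ico 0 b, (k:ℝ) * ((a*k/b : ℕ):ℝ)
      = ∑ k ∈ Finset.Ico 1 b, (k:ℝ) * ((a*k/b : ℕ):ℝ) := by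
    rw [Finset.sum_eq_sum_Ico_succ_bot hb]; norm_num
  have s3 : ∑ k ∈ Finset.Ico 0 b, (k:ℝ) = ∑ k ∈ Finset.Ico 1 b, (k:ℝ) := by
    rw [Finset.sum_eq_sum_Ico_succ_bot hb]; norm_num
  have s4 : ∑ k ∈ Finset.Ico 0 b, ((a*k/b:ℕ):ℝ) = ∑ k ∈ Finset.Ico 1 b, ((a*k/b:ℕ):ℝ) := by
    rw [Finset.sum_eq_sum_Ico_succ_bot hb]
    norm_num [Nat.zero_div]
  rw [s1, s2, s3, s4]
  rw [Finset.sum_add_distrib, Finset.sum_add_distrib, Finset.sum_sub_distrib,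
    Finset.sum_sub_distrib, ← Finset.mul_sum, ← Finset.mul_sum, ← Finset.mul_sum,
    ← Finset.mul_sum, Finset.sum_const, Nat.card_Ico, nsmul_eq_mul]
  have hcast : ((b - 1 : ℕ):ℝ) = (b:ℝ) - 1 := by
    rw [Nat.cast_sub hb]; norm_num
  rw [hcast]
  ring
lemma dedF (a b : ℕ) (hb : 0 < b) (h : Nat.Coprime a b) :
    12*(a:ℝ)*(b:ℝ) * dedekindSum (a:ℤ) b
      = 2*(a:ℝ)^2*((b:ℝ)-1)*(2*(b:ℝ)-1)
        - 12*(a:ℝ)*(∑ k ∈ Finset.range b, (k:ℝ) * ((a*k/b : ℕ):ℝ))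
        - 3*(a:ℝ)*((a:ℝ)+1)*(b:ℝ)*((b:ℝ)-1)
        + 6*(a:ℝ)*(b:ℝ)*(∑ k ∈ Finset.range b, ((a*k/b:ℕ):ℝ))
        + 3*(a:ℝ)*(b:ℝ)^2 - 3*(a:ℝ)*(b:ℝ) := by
  have hbR : (b:ℝ) ≠ 0 := Nat.cast_ne_zero.mpr (by omega)
  have hP2 : (∑ k ∈ Finset.range b, (k:ℝ)^2) * 6 = (b:ℝ)*((b:ℝ)-1)*(2*(b:ℝ)-1) := by
    have hc := congrArg (fun z : ℤ => (z : ℝ)) (gauss2 b)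
    push_cast at hc
    linear_combination hc
  have hP1 : (∑ k ∈ Finset.range b, (k:ℝ)) * 2 = (b:ℝ)*((b:ℝ)-1) := by
    have hc := congrArg (fun z : ℤ => (z : ℝ)) (gauss1 b)
    push_cast at hc
    linear_combination hc
  rw [ded_sum_eq a b hb h,
    show (∑ k ∈ Finset.range b, (k:ℝ)^2) = (b:ℝ)*((b:ℝ)-1)*(2*(b:ℝ)-1)/6 by linarith,
    show (∑ k ∈ Finset.range b, (k:ℝ)) = (b:ℝ)*((b:ℝ)-1)/2 by linarith]
  field_simp
  ring

lemma ded_recip (a b : ℕ) (ha : 0 < a) (hb : 0 < b) (h : Nat.Coprime a b) :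
    12*(a:ℝ)*(b:ℝ) * (dedekindSum (a:ℤ) b + dedekindSum (b:ℤ) a)
      = (a:ℝ)^2 + (b:ℝ)^2 - 3*(a:ℝ)*(b:ℝ) + 1 := by
  have hbZ : (b:ℤ) ≠ 0 := Int.natCast_ne_zero.mpr (by omega)
  have haZ : (a:ℤ) ≠ 0 := Int.natCast_ne_zero.mpr (by omega)
  have F1 := dedF a b hb h
  have F2 := dedF b a ha (Nat.coprime_comm.mp h)
  -- key identity (integers): 12a·Dab + 12b·Dba + 6b·Sab = (a²-1)(b-1)(2b-1) + 6ab(a-1)(b-1)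
  have keyZ : 12*(a:ℤ)*(∑ k ∈ Finset.range b, (k:ℤ) * ((a*k/b:ℕ):ℤ))
      + 12*(b:ℤ)*(∑ j ∈ Finset.range a, (j:ℤ) * ((b*j/a:ℕ):ℤ))
      + 6*(b:ℤ)*(∑ k ∈ Finset.range b, ((a*k/b:ℕ):ℤ))
      = ((a:ℤ)^2-1)*((b:ℤ)-1)*(2*(b:ℤ)-1) + 6*(a:ℤ)*(b:ℤ)*((a:ℤ)-1)*((b:ℤ)-1) := by
    have H : (b:ℤ) * (12*(a:ℤ)*(∑ k ∈ Finset.range b, (k:ℤ) * ((a*k/b:ℕ):ℤ))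
        + 12*(b:ℤ)*(∑ j ∈ Finset.range a, (j:ℤ) * ((b*j/a:ℕ):ℤ))
        + 6*(b:ℤ)*(∑ k ∈ Finset.range b, ((a*k/b:ℕ):ℤ)))
        = (b:ℤ) * (((a:ℤ)^2-1)*((b:ℤ)-1)*(2*(b:ℤ)-1) + 6*(a:ℤ)*(b:ℤ)*((a:ℤ)-1)*((b:ℤ)-1)) := by
      linear_combination (-6 : ℤ) * (sumE a b hb h) + ((a:ℤ)^2 - 1) * (gauss2 b)
        + 6*(b:ℤ)^2 * (count2 a b ha hb h)
    exact mul_left_cancel₀ hbZ H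
  have hSabZ : 2*(∑ k ∈ Finset.range b, ((a*k/b:ℕ):ℤ)) = ((a:ℤ)-1)*((b:ℤ)-1) := by
    have H : (b:ℤ) * (2*(∑ k ∈ Finset.range b, ((a*k/b:ℕ):ℤ)))
        = (b:ℤ) * (((a:ℤ)-1)*((b:ℤ)-1)) := by
      linear_combination (-2 : ℤ) * (sumS a b hb h) + ((a:ℤ)-1) * (gauss1 b)
    exact mul_left_cancel₀ hbZ H
  have hSbaZ : 2*(∑ k ∈ Finset.range a, ((b*k/a:ℕ):ℤ)) = ((b:ℤ)-1)*((a:ℤ)-1) := by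
    have H : (a:ℤ) * (2*(∑ k ∈ Finset.range a, ((b*k/a:ℕ):ℤ)))
        = (a:ℤ) * (((b:ℤ)-1)*((a:ℤ)-1)) := by
      linear_combination (-2 : ℤ) * (sumS b a ha (Nat.coprime_comm.mp h)) + ((b:ℤ)-1) * (gauss1 a)
    exact mul_left_cancel₀ haZ H
  have keyR : 12*(a:ℝ)*(∑ k ∈ Finset.range b, (k:ℝ) * ((a*k/b:ℕ):ℝ))
      + 12*(b:ℝ)*(∑ j ∈ Finset.range a, (j:ℝ) * ((b*j/a:ℕ):ℝ))
      + 6*(b:ℝ)*(∑ k ∈ Finset.range b, ((a*k/b:ℕ):ℝ))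
      = ((a:ℝ)^2-1)*((b:ℝ)-1)*(2*(b:ℝ)-1) + 6*(a:ℝ)*(b:ℝ)*((a:ℝ)-1)*((b:ℝ)-1) := by
    have hc := congrArg (fun z : ℤ => (z : ℝ)) keyZ
    simp only [Int.cast_sum, Int.cast_add, Int.cast_mul, Int.cast_sub, Int.cast_pow,
      Int.cast_one, Int.cast_ofNat, Int.cast_natCast] at hc
    linear_combination hc
  have hSabR : 2*(∑ k ∈ Finset.range b, ((a*k/b:ℕ):ℝ)) = ((a:ℝ)-1)*((b:ℝ)-1) := by
    have hc := congrArg (fun z : ℤ => (z : ℝ)) hSabZ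
    simp only [Int.cast_sum, Int.cast_add, Int.cast_mul, Int.cast_sub, Int.cast_pow,
      Int.cast_one, Int.cast_ofNat, Int.cast_natCast] at hc
    linear_combination hc
  have hSbaR : 2*(∑ k ∈ Finset.range a, ((b*k/a:ℕ):ℝ)) = ((b:ℝ)-1)*((a:ℝ)-1) := by
    have hc := congrArg (fun z : ℤ => (z : ℝ)) hSbaZ
    simp only [Int.cast_sum, Int.cast_add, Int.cast_mul, Int.cast_sub, Int.cast_pow,
      Int.cast_one, Int.cast_ofNat, Int.cast_natCast] at hc
    linear_combination hc
  linear_combination F1 + F2 - keyR + 3*(b:ℝ)*((a:ℝ)+1)*hSabR + 3*(a:ℝ)*(b:ℝ)*hSbaR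
lemma drR1 (a b : ℕ) (hb : 0 < b) :
    drSum (a:ℤ) b 0 (1/2) = dedekindSum (a:ℤ) (2*b) - dedekindSum (a:ℤ) b := by
  have hbR : (b:ℝ) ≠ 0 := Nat.cast_ne_zero.mpr (by omega)
  have h2 : (2:ℝ) ≠ 0 := two_ne_zero
  simp only [dedekindSum, drSum]
  rw [sum_range_two_mul b (fun ν => saw ((ν:ℝ)/((2*b:ℕ):ℝ)) * saw ((((a:ℕ):ℤ):ℝ)*(ν:ℝ)/((2*b:ℕ):ℝ))),
    Finset.sum_add_distrib]
  have heven : ∀ μ ∈ Finset.range b,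
      saw (((2*μ:ℕ):ℝ)/((2*b:ℕ):ℝ)) * saw ((((a:ℕ):ℤ):ℝ)*((2*μ:ℕ):ℝ)/((2*b:ℕ):ℝ))
        = saw ((μ:ℝ)/(b:ℝ)) * saw ((((a:ℕ):ℤ):ℝ)*(μ:ℝ)/(b:ℝ)) := by
    intro μ _
    have e1 : ((2*μ:ℕ):ℝ)/((2*b:ℕ):ℝ) = (μ:ℝ)/(b:ℝ) := by
      push_cast
      rw [mul_div_mul_left _ _ h2]
    have e2 : (((a:ℕ):ℤ):ℝ)*((2*μ:ℕ):ℝ)/((2*b:ℕ):ℝ) = (((a:ℕ):ℤ):ℝ)*(μ:ℝ)/(b:ℝ) := by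
      push_cast
      field_simp
    rw [e1, e2]
  have hodd : ∀ μ ∈ Finset.range b,
      saw (((2*μ+1:ℕ):ℝ)/((2*b:ℕ):ℝ)) * saw ((((a:ℕ):ℤ):ℝ)*((2*μ+1:ℕ):ℝ)/((2*b:ℕ):ℝ))
        = saw (((μ:ℝ) + 1/2)/(b:ℝ)) * saw ((((a:ℕ):ℤ):ℝ)*((μ:ℝ) + 1/2)/(b:ℝ) + 0) := by
    intro μ _
    have e1 : ((2*μ+1:ℕ):ℝ)/((2*b:ℕ):ℝ) = ((μ:ℝ) + 1/2)/(b:ℝ) := by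
      push_cast
      field_simp
    have e2 : (((a:ℕ):ℤ):ℝ)*((2*μ+1:ℕ):ℝ)/((2*b:ℕ):ℝ) = (((a:ℕ):ℤ):ℝ)*((μ:ℝ) + 1/2)/(b:ℝ) + 0 := by
      rw [add_zero]
      push_cast
      rw [div_eq_div_iff (by positivity) (by positivity : (0:ℝ) < (b:ℝ)).ne']
      ring
    rw [e1, e2]
  rw [Finset.sum_congr rfl heven, Finset.sum_congr rfl hodd]
  ring

lemma drR2 (a b : ℕ) (ha : 0 < a) :
    drSum (b:ℤ) a (1/2) 0 = dedekindSum ((2*b:ℕ):ℤ) a - dedekindSum (b:ℤ) a := by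
  simp only [dedekindSum, drSum]
  rw [← Finset.sum_sub_distrib]
  apply Finset.sum_congr rfl
  intro μ _
  have e0 : ((μ:ℝ) + 0)/(a:ℝ) = (μ:ℝ)/(a:ℝ) := by rw [add_zero]
  have e1 : (((b:ℕ):ℤ):ℝ)*((μ:ℝ) + 0)/(a:ℝ) + 1/2 = ((((b:ℕ):ℤ):ℝ)*(μ:ℝ)/(a:ℝ)) + 1/2 := by
    rw [add_zero]
  rw [e0, e1, saw_half]
  have e2 : 2*((((b:ℕ):ℤ):ℝ)*(μ:ℝ)/(a:ℝ)) = (((2*b:ℕ):ℤ):ℝ)*(μ:ℝ)/(a:ℝ) := by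
    push_cast
    ring
  rw [e2]
  ring

theorem dr_reciprocity (a b : ℕ) (ha : 0 < a) (hb : 0 < b)
    (hcop : Nat.Coprime a b) (hodd : Odd a) :
    drSum (a : ℤ) b 0 (1/2) + drSum (b : ℤ) a (1/2) 0
      = (2 * (b : ℝ)^2 - (a : ℝ)^2 - 1) / (24 * a * b) := by
  have hcop2 : Nat.Coprime a (2*b) := Nat.Coprime.mul_right (Odd.coprime_two_right hodd) hcop
  have h2b : 0 < 2*b := by omega
  have Rec1 := ded_recip a (2*b) ha h2b hcop2
  have Rec2 := ded_recip a b ha hb hcop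
  have haR : (a:ℝ) ≠ 0 := Nat.cast_ne_zero.mpr (by omega)
  have hbR : (b:ℝ) ≠ 0 := Nat.cast_ne_zero.mpr (by omega)
  have h24 : (24*(a:ℝ)*(b:ℝ)) ≠ 0 := by positivity
  rw [drR1 a b hb, drR2 a b ha, eq_div_iff h24,
    show ((2*b:ℕ):ℤ) = 2*((b:ℕ):ℤ) from by push_cast; ring]
  push_cast at Rec1
  linear_combination Rec1 - 2*Rec2
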